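/- arXiv:2509.02535 — 9 statements merged into one kernel-verified Lean document; each statement's English description precedes it below -/
import Mathlib

section
/- Let M be a full SCM and M' a reduced SCM that share the same data (U1, p1, fX, fY) and (U2, p2, fZ), with the parameter γ of M' equal to P_M(S = 1), and suppose P_M(X = 1, Y = 1) > 0. Then P_{M'}(X = 1, Y = 1) = P_M(X = 1, Y = 1), and the probabilities of necessity coincide: P_M(Y_{X=0} = 0, X = 1, Y = 1) / P_M(X = 1, Y = 1) = P_{M'}(Y_{X=0} = 0, X = 1, Y = 1) / P_{M'}(X = 1, Y = 1). -/
open Finset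

attribute [local instance] Classical.propDecidable

/-- A reduced SCM as in the paper: exogenous `U1`, `U2`, a parameter `γ` for the
binary pre-treatment variable `S`, and mechanisms `fX`, `fZ`, `fY`. -/
structure ReducedSCM (U1 U2 : Type) [Fintype U1] [Fintype U2] where
  p1 : U1 → ℝ
  p2 : U2 → ℝ
  gamma : ℝ
  p1_nonneg : ∀ u, 0 ≤ p1 u
  p2_nonneg : ∀ u, 0 ≤ p2 u
  p1_sum : ∑ u, p1 u = 1
  p2_sum : ∑ u, p2 u = 1
  gamma_nonneg : 0 ≤ gamma
  gamma_le_one : gamma ≤ 1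
  fX : U1 → Bool
  fZ : Bool → Bool → U2 → Bool
  fY : Bool → U1 → Bool

namespace ReducedSCM

variable {U1 U2 : Type} [Fintype U1] [Fintype U2]

/-- Probability of a unit `(u1, u2, s)`. -/
def w (M : ReducedSCM U1 U2) (u : U1 × U2 × Bool) : ℝ :=
  M.p1 u.1 * M.p2 u.2.1 * (if u.2.2 then M.gamma else 1 - M.gamma)

/-- Probability of an event. -/
noncomputable def P (M : ReducedSCM U1 U2) (E : U1 × U2 × Bool → Prop) : ℝ :=
  ∑ u, if E u then M.w u else 0

/-- Conditional probability `P(A | B)`. -/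
noncomputable def Pcond (M : ReducedSCM U1 U2) (A B : U1 × U2 × Bool → Prop) : ℝ :=
  M.P (fun u => A u ∧ B u) / M.P B

def S (_M : ReducedSCM U1 U2) (u : U1 × U2 × Bool) : Bool := u.2.2

def X (M : ReducedSCM U1 U2) (u : U1 × U2 × Bool) : Bool := M.fX u.1

def Z (M : ReducedSCM U1 U2) (u : U1 × U2 × Bool) : Bool := M.fZ (M.S u) (M.X u) u.2.1

def Y (M : ReducedSCM U1 U2) (u : U1 × U2 × Bool) : Bool := M.fY (M.Z u) u.1

/-- Potential outcome `Y_{X=x}`. -/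
def Yx (M : ReducedSCM U1 U2) (x : Bool) (u : U1 × U2 × Bool) : Bool :=
  M.fY (M.fZ (M.S u) x u.2.1) u.1

end ReducedSCM

/-- A full SCM as in the paper: exogenous `U1`, `U2`, `U5`, `U6` and mechanisms
`fT`, `fS`, `fX`, `fZ`, `fY`. -/
structure FullSCM (U1 U2 U5 U6 : Type)
    [Fintype U1] [Fintype U2] [Fintype U5] [Fintype U6] where
  p1 : U1 → ℝ
  p2 : U2 → ℝ
  p5 : U5 → ℝ
  p6 : U6 → ℝ
  p1_nonneg : ∀ u, 0 ≤ p1 u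
  p2_nonneg : ∀ u, 0 ≤ p2 u
  p5_nonneg : ∀ u, 0 ≤ p5 u
  p6_nonneg : ∀ u, 0 ≤ p6 u
  p1_sum : ∑ u, p1 u = 1
  p2_sum : ∑ u, p2 u = 1
  p5_sum : ∑ u, p5 u = 1
  p6_sum : ∑ u, p6 u = 1
  fT : U6 → Bool
  fS : Bool → U5 → Bool
  fX : U1 → Bool
  fZ : Bool → Bool → U2 → Bool
  fY : Bool → U1 → Bool

namespace FullSCM

variable {U1 U2 U5 U6 : Type} [Fintype U1] [Fintype U2] [Fintype U5] [Fintype U6]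

/-- Probability of a unit `(u1, u2, u5, u6)`. -/
def w (M : FullSCM U1 U2 U5 U6) (u : U1 × U2 × U5 × U6) : ℝ :=
  M.p1 u.1 * M.p2 u.2.1 * M.p5 u.2.2.1 * M.p6 u.2.2.2

/-- Probability of an event. -/
noncomputable def P (M : FullSCM U1 U2 U5 U6) (E : U1 × U2 × U5 × U6 → Prop) : ℝ :=
  ∑ u, if E u then M.w u else 0

def T (M : FullSCM U1 U2 U5 U6) (u : U1 × U2 × U5 × U6) : Bool := M.fT u.2.2.2

def S (M : FullSCM U1 U2 U5 U6) (u : U1 × U2 × U5 × U6) : Bool := M.fS (M.T u) u.2.2.1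

def X (M : FullSCM U1 U2 U5 U6) (u : U1 × U2 × U5 × U6) : Bool := M.fX u.1

def Z (M : FullSCM U1 U2 U5 U6) (u : U1 × U2 × U5 × U6) : Bool :=
  M.fZ (M.S u) (M.X u) u.2.1

def Y (M : FullSCM U1 U2 U5 U6) (u : U1 × U2 × U5 × U6) : Bool := M.fY (M.Z u) u.1

/-- Potential outcome `Y_{X=x}`. -/
def Yx (M : FullSCM U1 U2 U5 U6) (x : Bool) (u : U1 × U2 × U5 × U6) : Bool :=
  M.fY (M.fZ (M.S u) x u.2.1) u.1

end FullSCM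

lemma transfer_P
    {U1 U2 U5 U6 : Type} [Fintype U1] [Fintype U2] [Fintype U5] [Fintype U6]
    (M : FullSCM U1 U2 U5 U6) (M' : ReducedSCM U1 U2)
    (hp1 : M'.p1 = M.p1) (hp2 : M'.p2 = M.p2)
    (hgamma : M'.gamma = M.P (fun u => M.S u = true))
    (A : U1 → U2 → Bool → Prop) :
    M.P (fun u => A u.1 u.2.1 (M.S u)) = M'.P (fun u => A u.1 u.2.1 u.2.2) := by
  classical
  have htot : (∑ u5, ∑ u6, M.p5 u5 * M.p6 u6) = 1 := by
    rw [← Finset.sum_mul_sum, M.p5_sum, M.p6_sum]; norm_num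
  have hγ1 : (∑ u5, ∑ u6, if M.fS (M.fT u6) u5 = true then M.p5 u5 * M.p6 u6 else 0)
      = M'.gamma := by
    rw [hgamma]
    unfold FullSCM.P FullSCM.w FullSCM.S FullSCM.T
    rw [Fintype.sum_prod_type]
    simp only [Fintype.sum_prod_type]
    have : ∀ u1 : U1, (∑ u2 : U2, ∑ u5 : U5, ∑ u6 : U6,
        if M.fS (M.fT u6) u5 = true then M.p1 u1 * M.p2 u2 * M.p5 u5 * M.p6 u6 else 0)
        = M.p1 u1 * ∑ u2, M.p2 u2 *
          ∑ u5, ∑ u6, (if M.fS (M.fT u6) u5 = true then M.p5 u5 * M.p6 u6 else 0) := by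
      intro u1
      rw [Finset.mul_sum]
      refine Finset.sum_congr rfl fun u2 _ => ?_
      rw [Finset.mul_sum, Finset.mul_sum]
      refine Finset.sum_congr rfl fun u5 _ => ?_
      rw [Finset.mul_sum, Finset.mul_sum]
      refine Finset.sum_congr rfl fun u6 _ => ?_
      by_cases h : M.fS (M.fT u6) u5 = true <;> simp [h] <;> ring
    simp only [this]
    rw [← Finset.sum_mul, M.p1_sum, one_mul, ← Finset.sum_mul, M.p2_sum, one_mul]
  have hγ0 : (∑ u5, ∑ u6, if M.fS (M.fT u6) u5 = false then M.p5 u5 * M.p6 u6 else 0)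
      = 1 - M'.gamma := by
    rw [← hγ1, ← htot]
    rw [eq_sub_iff_add_eq, ← Finset.sum_add_distrib]
    refine Finset.sum_congr rfl fun u5 _ => ?_
    rw [← Finset.sum_add_distrib]
    refine Finset.sum_congr rfl fun u6 _ => ?_
    cases h : M.fS (M.fT u6) u5 <;> simp [h]
  unfold FullSCM.P ReducedSCM.P FullSCM.w ReducedSCM.w FullSCM.S FullSCM.T
  simp only [Fintype.sum_prod_type, Fintype.sum_bool, hp1, hp2]
  refine Finset.sum_congr rfl fun u1 _ => ?_
  refine Finset.sum_congr rfl fun u2 _ => ?_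
  have step : ∀ (u5 : U5) (u6 : U6),
      (if A u1 u2 (M.fS (M.fT u6) u5) then M.p1 u1 * M.p2 u2 * M.p5 u5 * M.p6 u6 else 0)
      = M.p1 u1 * M.p2 u2 * (if A u1 u2 (M.fS (M.fT u6) u5) then M.p5 u5 * M.p6 u6 else 0) := by
    intro u5 u6
    by_cases h : A u1 u2 (M.fS (M.fT u6) u5) <;> simp [h] <;> ring
  simp only [step, ← Finset.mul_sum]
  have inner : (∑ u5, ∑ u6, if A u1 u2 (M.fS (M.fT u6) u5) then M.p5 u5 * M.p6 u6 else 0)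
      = (if A u1 u2 true then M'.gamma else 0)
        + (if A u1 u2 false then 1 - M'.gamma else 0) := by
    by_cases hA : A u1 u2 true <;> by_cases hB : A u1 u2 false
    · have hall : ∀ b : Bool, A u1 u2 b := by intro b; cases b <;> assumption
      simp only [hall, if_true, hA, hB]
      rw [htot]; ring
    · have hpt : ∀ (u5 : U5) (u6 : U6),
          (if A u1 u2 (M.fS (M.fT u6) u5) then M.p5 u5 * M.p6 u6 else 0)
          = (if M.fS (M.fT u6) u5 = true then M.p5 u5 * M.p6 u6 else 0) := by
        intro u5 u6; cases h : M.fS (M.fT u6) u5 <;> simp [h, hA, hB]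
      simp only [hpt, hγ1, hA, hB, if_true, if_false, add_zero]
    · have hpt : ∀ (u5 : U5) (u6 : U6),
          (if A u1 u2 (M.fS (M.fT u6) u5) then M.p5 u5 * M.p6 u6 else 0)
          = (if M.fS (M.fT u6) u5 = false then M.p5 u5 * M.p6 u6 else 0) := by
        intro u5 u6; cases h : M.fS (M.fT u6) u5 <;> simp [h, hA, hB]
      simp only [hpt, hγ0, hA, hB, if_true, if_false, zero_add]
    · have hpt : ∀ (u5 : U5) (u6 : U6),
          (if A u1 u2 (M.fS (M.fT u6) u5) then M.p5 u5 * M.p6 u6 else 0) = 0 := by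
        intro u5 u6; cases h : M.fS (M.fT u6) u5 <;> simp [h, hA, hB]
      simp [hpt, hA, hB]
  rw [inner]
  by_cases hA : A u1 u2 true <;> by_cases hB : A u1 u2 false <;>
    simp [hA, hB] <;> ring

/-- A full SCM `M` and a reduced SCM `M'` sharing the data
`(U1, p1, fX, fY)` and `(U2, p2, fZ)`, with `γ = P_M(S = 1)` and
`P_M(X = 1, Y = 1) > 0`, give the same `P(X = 1, Y = 1)` and the same
probability of necessity. -/
theorem full_reduced_same_PN
    {U1 U2 U5 U6 : Type} [Fintype U1] [Fintype U2] [Fintype U5] [Fintype U6]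
    (M : FullSCM U1 U2 U5 U6) (M' : ReducedSCM U1 U2)
    (hp1 : M'.p1 = M.p1) (hp2 : M'.p2 = M.p2)
    (hfX : M'.fX = M.fX) (hfZ : M'.fZ = M.fZ) (hfY : M'.fY = M.fY)
    (hgamma : M'.gamma = M.P (fun u => M.S u = true))
    (hpos : 0 < M.P (fun u => M.X u = true ∧ M.Y u = true)) :
    M'.P (fun u => M'.X u = true ∧ M'.Y u = true)
        = M.P (fun u => M.X u = true ∧ M.Y u = true) ∧
    M.P (fun u => M.Yx false u = false ∧ M.X u = true ∧ M.Y u = true)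
        / M.P (fun u => M.X u = true ∧ M.Y u = true)
      = M'.P (fun u => M'.Yx false u = false ∧ M'.X u = true ∧ M'.Y u = true)
        / M'.P (fun u => M'.X u = true ∧ M'.Y u = true) := by
  have hden : M'.P (fun u => M'.X u = true ∧ M'.Y u = true)
      = M.P (fun u => M.X u = true ∧ M.Y u = true) := by
    have := transfer_P M M' hp1 hp2 hgamma
      (fun u1 u2 s => M.fX u1 = true ∧ M.fY (M.fZ s (M.fX u1) u2) u1 = true)
    have eM' : (fun u : U1 × U2 × Bool => M'.X u = true ∧ M'.Y u = true)
        = (fun u => M.fX u.1 = true ∧ M.fY (M.fZ u.2.2 (M.fX u.1) u.2.1) u.1 = true) := by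
      funext u
      simp [ReducedSCM.X, ReducedSCM.Y, ReducedSCM.Z, ReducedSCM.S, hfX, hfZ, hfY]
    rw [eM', ← this]
    rfl
  have hnum : M'.P (fun u => M'.Yx false u = false ∧ M'.X u = true ∧ M'.Y u = true)
      = M.P (fun u => M.Yx false u = false ∧ M.X u = true ∧ M.Y u = true) := by
    have := transfer_P M M' hp1 hp2 hgamma
      (fun u1 u2 s => M.fY (M.fZ s false u2) u1 = false ∧
        M.fX u1 = true ∧ M.fY (M.fZ s (M.fX u1) u2) u1 = true)
    have eM' : (fun u : U1 × U2 × Bool => M'.Yx false u = false ∧ M'.X u = true ∧ M'.Y u = true)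
        = (fun u => M.fY (M.fZ u.2.2 false u.2.1) u.1 = false ∧
            M.fX u.1 = true ∧ M.fY (M.fZ u.2.2 (M.fX u.1) u.2.1) u.1 = true) := by
      funext u
      simp [ReducedSCM.X, ReducedSCM.Y, ReducedSCM.Z, ReducedSCM.S, ReducedSCM.Yx,
        hfX, hfZ, hfY]
    rw [eM', ← this]
    rfl
  exact ⟨hden, by rw [hden, hnum]⟩
end

section
/- Let M be a full SCM and M' a reduced SCM that share the same data (U1, p1, fX, fY) and (U2, p2, fZ), with the parameter γ of M' equal to P_M(S = 1), and suppose P_M(X = 0, Y = 0) > 0. Then P_{M'}(X = 0, Y = 0) = P_M(X = 0, Y = 0), and the probabilities of sufficiency coincide: P_M(Y_{X=1} = 1, X = 0, Y = 0) / P_M(X = 0, Y = 0) = P_{M'}(Y_{X=1} = 1, X = 0, Y = 0) / P_{M'}(X = 0, Y = 0). -/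
open Finset

attribute [local instance] Classical.propDecidable

section Aux

variable {U1 U2 U5 U6 : Type} [Fintype U1] [Fintype U2] [Fintype U5] [Fintype U6]

/-- The probability that `S = 1` in the full SCM, as a sum over `U5 × U6`. -/
noncomputable def gamM (M : FullSCM U1 U2 U5 U6) : ℝ :=
  ∑ u5, ∑ u6, if M.fS (M.fT u6) u5 = true then M.p5 u5 * M.p6 u6 else 0

lemma gamM_compl (M : FullSCM U1 U2 U5 U6) :
    (∑ u5, ∑ u6, if M.fS (M.fT u6) u5 = true then (0:ℝ) else M.p5 u5 * M.p6 u6)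
      = 1 - gamM M := by
  have h : gamM M + (∑ u5, ∑ u6, if M.fS (M.fT u6) u5 = true then (0:ℝ)
      else M.p5 u5 * M.p6 u6) = 1 := by
    unfold gamM
    rw [← Finset.sum_add_distrib]
    have : ∀ u5 : U5, ((∑ u6, if M.fS (M.fT u6) u5 = true then M.p5 u5 * M.p6 u6 else 0)
        + ∑ u6, if M.fS (M.fT u6) u5 = true then (0:ℝ) else M.p5 u5 * M.p6 u6)
        = ∑ u6, M.p5 u5 * M.p6 u6 := by
      intro u5
      rw [← Finset.sum_add_distrib]
      refine Finset.sum_congr rfl fun u6 _ => ?_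
      split_ifs <;> ring
    simp only [this]
    rw [← Finset.sum_mul_sum, M.p5_sum, M.p6_sum, one_mul]
  linarith

lemma gamM_eq_P (M : FullSCM U1 U2 U5 U6) :
    M.P (fun u => M.S u = true) = gamM M := by
  unfold FullSCM.P FullSCM.w FullSCM.S FullSCM.T gamM
  rw [Fintype.sum_prod_type]
  have h : ∀ u1 : U1, (∑ u : U2 × U5 × U6,
      if M.fS (M.fT u.2.2) u.2.1 = true then M.p1 u1 * M.p2 u.1 * M.p5 u.2.1 * M.p6 u.2.2 else 0)
      = M.p1 u1 * ∑ u5, ∑ u6, (if M.fS (M.fT u6) u5 = true then M.p5 u5 * M.p6 u6 else 0) := by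
    intro u1
    rw [Fintype.sum_prod_type]
    have h2 : ∀ u2 : U2, (∑ u : U5 × U6,
        if M.fS (M.fT u.2) u.1 = true then M.p1 u1 * M.p2 u2 * M.p5 u.1 * M.p6 u.2 else 0)
        = M.p1 u1 * M.p2 u2 * ∑ u5, ∑ u6,
          (if M.fS (M.fT u6) u5 = true then M.p5 u5 * M.p6 u6 else 0) := by
      intro u2
      rw [Fintype.sum_prod_type, Finset.mul_sum]
      refine Finset.sum_congr rfl fun u5 _ => ?_
      rw [Finset.mul_sum]
      refine Finset.sum_congr rfl fun u6 _ => ?_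
      split_ifs <;> ring
    simp only [h2]
    rw [← Finset.sum_mul, ← Finset.mul_sum, M.p2_sum]
    ring
  simp only [h]
  rw [← Finset.sum_mul, M.p1_sum, one_mul]

lemma reduced_P_eq (M' : ReducedSCM U1 U2) (g : U1 × U2 × Bool → Prop) :
    M'.P g = ∑ u1, ∑ u2, M'.p1 u1 * M'.p2 u2 *
      ((if g (u1, u2, true) then M'.gamma else 0) +
       (if g (u1, u2, false) then 1 - M'.gamma else 0)) := by
  unfold ReducedSCM.P ReducedSCM.w
  rw [Fintype.sum_prod_type]
  refine Finset.sum_congr rfl fun u1 _ => ?_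
  rw [Fintype.sum_prod_type]
  refine Finset.sum_congr rfl fun u2 _ => ?_
  rw [Fintype.sum_bool]
  by_cases h1 : g (u1, u2, true) <;> by_cases h2 : g (u1, u2, false) <;>
    simp [h1, h2] <;> ring

lemma full_P_eq (M : FullSCM U1 U2 U5 U6) (g : U1 × U2 × Bool → Prop) :
    M.P (fun u => g (u.1, u.2.1, M.S u)) = ∑ u1, ∑ u2, M.p1 u1 * M.p2 u2 *
      ((if g (u1, u2, true) then gamM M else 0) +
       (if g (u1, u2, false) then 1 - gamM M else 0)) := by
  unfold FullSCM.P FullSCM.w FullSCM.S FullSCM.T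
  rw [Fintype.sum_prod_type]
  refine Finset.sum_congr rfl fun u1 _ => ?_
  rw [Fintype.sum_prod_type]
  refine Finset.sum_congr rfl fun u2 _ => ?_
  rw [Fintype.sum_prod_type]
  have key : ∀ u5 : U5, ∀ u6 : U6,
      (if g (u1, u2, M.fS (M.fT u6) u5) then M.p1 u1 * M.p2 u2 * M.p5 u5 * M.p6 u6 else 0)
      = (if g (u1, u2, true) then
          (if M.fS (M.fT u6) u5 = true then M.p1 u1 * M.p2 u2 * (M.p5 u5 * M.p6 u6) else 0)
          else 0)
        + (if g (u1, u2, false) then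
          (if M.fS (M.fT u6) u5 = true then 0 else M.p1 u1 * M.p2 u2 * (M.p5 u5 * M.p6 u6))
          else 0) := by
    intro u5 u6
    cases hs : M.fS (M.fT u6) u5 <;>
      by_cases h1 : g (u1, u2, true) <;> by_cases h2 : g (u1, u2, false) <;>
        simp [h1, h2] <;> ring
  simp only [key]
  simp only [Finset.sum_add_distrib]
  have hA : (∑ u5, ∑ u6, (if g (u1, u2, true) then
      (if M.fS (M.fT u6) u5 = true then M.p1 u1 * M.p2 u2 * (M.p5 u5 * M.p6 u6) else 0)
      else 0)) = M.p1 u1 * M.p2 u2 * (if g (u1, u2, true) then gamM M else 0) := by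
    by_cases h1 : g (u1, u2, true)
    · simp only [h1, if_true]
      unfold gamM
      rw [Finset.mul_sum]
      refine Finset.sum_congr rfl fun u5 _ => ?_
      rw [Finset.mul_sum]
      refine Finset.sum_congr rfl fun u6 _ => ?_
      split_ifs <;> ring
    · simp [h1]
  have hB : (∑ u5, ∑ u6, (if g (u1, u2, false) then
      (if M.fS (M.fT u6) u5 = true then 0 else M.p1 u1 * M.p2 u2 * (M.p5 u5 * M.p6 u6))
      else 0)) = M.p1 u1 * M.p2 u2 * (if g (u1, u2, false) then 1 - gamM M else 0) := by
    by_cases h2 : g (u1, u2, false)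
    · simp only [h2, if_true]
      rw [← gamM_compl M, Finset.mul_sum]
      refine Finset.sum_congr rfl fun u5 _ => ?_
      rw [Finset.mul_sum]
      refine Finset.sum_congr rfl fun u6 _ => ?_
      split_ifs <;> ring
    · simp [h2]
  rw [hA, hB]
  ring

end Aux

/-- A full SCM `M` and a reduced SCM `M'` sharing the data
`(U1, p1, fX, fY)` and `(U2, p2, fZ)`, with `γ = P_M(S = 1)` and
`P_M(X = 0, Y = 0) > 0`, give the same `P(X = 0, Y = 0)` and the same
probability of sufficiency. -/
theorem full_reduced_same_PS
    {U1 U2 U5 U6 : Type} [Fintype U1] [Fintype U2] [Fintype U5] [Fintype U6]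
    (M : FullSCM U1 U2 U5 U6) (M' : ReducedSCM U1 U2)
    (hp1 : M'.p1 = M.p1) (hp2 : M'.p2 = M.p2)
    (hfX : M'.fX = M.fX) (hfZ : M'.fZ = M.fZ) (hfY : M'.fY = M.fY)
    (hgamma : M'.gamma = M.P (fun u => M.S u = true))
    (hpos : 0 < M.P (fun u => M.X u = false ∧ M.Y u = false)) :
    M'.P (fun u => M'.X u = false ∧ M'.Y u = false)
        = M.P (fun u => M.X u = false ∧ M.Y u = false) ∧
    M.P (fun u => M.Yx true u = true ∧ M.X u = false ∧ M.Y u = false)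
        / M.P (fun u => M.X u = false ∧ M.Y u = false)
      = M'.P (fun u => M'.Yx true u = true ∧ M'.X u = false ∧ M'.Y u = false)
        / M'.P (fun u => M'.X u = false ∧ M'.Y u = false) := by
  have hγ : M'.gamma = gamM M := by rw [hgamma, gamM_eq_P]
  have key : ∀ g : U1 × U2 × Bool → Prop,
      M'.P g = M.P (fun u => g (u.1, u.2.1, M.S u)) := by
    intro g
    rw [reduced_P_eq, full_P_eq, hp1, hp2, hγ]
  have h1 : M'.P (fun u => M'.X u = false ∧ M'.Y u = false)
      = M.P (fun u => M.X u = false ∧ M.Y u = false) := by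
    have hfun : (fun u : U1 × U2 × Bool => M'.X u = false ∧ M'.Y u = false)
        = (fun v : U1 × U2 × Bool =>
            M.fX v.1 = false ∧ M.fY (M.fZ v.2.2 (M.fX v.1) v.2.1) v.1 = false) := by
      funext v
      simp only [ReducedSCM.X, ReducedSCM.Y, ReducedSCM.Z, ReducedSCM.S, hfX, hfZ, hfY]
    rw [hfun]
    exact key (fun v : U1 × U2 × Bool =>
      M.fX v.1 = false ∧ M.fY (M.fZ v.2.2 (M.fX v.1) v.2.1) v.1 = false)
  have h2 : M'.P (fun u => M'.Yx true u = true ∧ M'.X u = false ∧ M'.Y u = false)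
      = M.P (fun u => M.Yx true u = true ∧ M.X u = false ∧ M.Y u = false) := by
    have hfun : (fun u : U1 × U2 × Bool =>
          M'.Yx true u = true ∧ M'.X u = false ∧ M'.Y u = false)
        = (fun v : U1 × U2 × Bool =>
            M.fY (M.fZ v.2.2 true v.2.1) v.1 = true ∧
              (M.fX v.1 = false ∧ M.fY (M.fZ v.2.2 (M.fX v.1) v.2.1) v.1 = false)) := by
      funext v
      simp only [ReducedSCM.Yx, ReducedSCM.X, ReducedSCM.Y, ReducedSCM.Z, ReducedSCM.S,
        hfX, hfZ, hfY]
    rw [hfun]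
    exact key (fun v : U1 × U2 × Bool =>
      M.fY (M.fZ v.2.2 true v.2.1) v.1 = true ∧
        (M.fX v.1 = false ∧ M.fY (M.fZ v.2.2 (M.fX v.1) v.2.1) v.1 = false))
  exact ⟨h1, by rw [h1, h2]⟩
end

section
/- Let M be a full SCM and M' a reduced SCM that share the same data (U1, p1, fX, fY) and (U2, p2, fZ), with the parameter γ of M' equal to P_M(S = 1). Then the probabilities of necessity and sufficiency coincide: P_M(Y_{X=1} = 1, Y_{X=0} = 0) = P_{M'}(Y_{X=1} = 1, Y_{X=0} = 0). -/
open Finset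

attribute [local instance] Classical.propDecidable

/-- A full SCM `M` and a reduced SCM `M'` sharing the data
`(U1, p1, fX, fY)` and `(U2, p2, fZ)`, with `γ = P_M(S = 1)`, have the same
probability of necessity and sufficiency `P(Y_{X=1} = 1, Y_{X=0} = 0)`. -/
theorem full_reduced_same_PNS
    {U1 U2 U5 U6 : Type} [Fintype U1] [Fintype U2] [Fintype U5] [Fintype U6]
    (M : FullSCM U1 U2 U5 U6) (M' : ReducedSCM U1 U2)
    (hp1 : M'.p1 = M.p1) (hp2 : M'.p2 = M.p2)
    (hfX : M'.fX = M.fX) (hfZ : M'.fZ = M.fZ) (hfY : M'.fY = M.fY)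
    (hgamma : M'.gamma = M.P (fun u => M.S u = true)) :
    M.P (fun u => M.Yx true u = true ∧ M.Yx false u = false)
      = M'.P (fun u => M'.Yx true u = true ∧ M'.Yx false u = false) := by
  classical
  -- indicator of the PNS event given the value of S
  set g : Bool → U1 → U2 → ℝ := fun s u1 u2 =>
    if (M.fY (M.fZ s true u2) u1 = true ∧ M.fY (M.fZ s false u2) u1 = false) then 1 else 0
    with hg
  set A : ℝ := ∑ u5 : U5, ∑ u6 : U6, M.p5 u5 * M.p6 u6 *
      (if M.fS (M.fT u6) u5 = true then 1 else 0) with hA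
  have hsum56 : (∑ u5 : U5, ∑ u6 : U6, M.p5 u5 * M.p6 u6) = 1 := by
    simp only [← Finset.mul_sum]
    rw [M.p6_sum]
    simp [M.p5_sum]
  have hAc : (∑ u5 : U5, ∑ u6 : U6, M.p5 u5 * M.p6 u6 *
      (if M.fS (M.fT u6) u5 = true then 0 else 1)) = 1 - A := by
    have h : (∑ u5 : U5, ∑ u6 : U6, (M.p5 u5 * M.p6 u6 *
        (if M.fS (M.fT u6) u5 = true then 0 else 1)
        + M.p5 u5 * M.p6 u6 * (if M.fS (M.fT u6) u5 = true then 1 else 0)))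
        = 1 := by
      have hpt : (∑ u5 : U5, ∑ u6 : U6, (M.p5 u5 * M.p6 u6 *
          (if M.fS (M.fT u6) u5 = true then 0 else 1)
          + M.p5 u5 * M.p6 u6 * (if M.fS (M.fT u6) u5 = true then 1 else 0)))
          = ∑ u5 : U5, ∑ u6 : U6, M.p5 u5 * M.p6 u6 := by
        refine Finset.sum_congr rfl fun u5 _ => Finset.sum_congr rfl fun u6 _ => ?_
        by_cases h : M.fS (M.fT u6) u5 = true <;> simp [h]
      rw [hpt, hsum56]
    have h2 := h
    simp only [Finset.sum_add_distrib] at h2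
    rw [← hA] at h2
    linarith
  have hAg : M'.gamma = A := by
    rw [hgamma]
    unfold FullSCM.P FullSCM.S FullSCM.T FullSCM.w
    rw [Fintype.sum_prod_type]
    simp only [Fintype.sum_prod_type]
    have : ∀ (u1 : U1) (u2 : U2) (u5 : U5) (u6 : U6),
        (if M.fS (M.fT u6) u5 = true then M.p1 u1 * M.p2 u2 * M.p5 u5 * M.p6 u6 else 0)
        = M.p1 u1 * (M.p2 u2 * (M.p5 u5 * M.p6 u6 *
            (if M.fS (M.fT u6) u5 = true then 1 else 0))) := by
      intro u1 u2 u5 u6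
      by_cases h : M.fS (M.fT u6) u5 = true <;> simp [h] <;> ring
    simp only [this]
    simp only [← Finset.mul_sum]
    rw [← Finset.sum_mul, ← Finset.sum_mul, M.p1_sum, M.p2_sum]
    simp [hA]
  -- decomposition of g at a boolean
  have hgdec : ∀ (b : Bool) (u1 : U1) (u2 : U2),
      g b u1 u2 = (if b = true then 1 else 0) * g true u1 u2
        + (if b = true then 0 else 1) * g false u1 u2 := by
    intro b u1 u2; cases b <;> simp
  -- LHS
  have hL : M.P (fun u => M.Yx true u = true ∧ M.Yx false u = false)
      = ∑ u1 : U1, M.p1 u1 * ∑ u2 : U2, M.p2 u2 *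
          (A * g true u1 u2 + (1 - A) * g false u1 u2) := by
    unfold FullSCM.P FullSCM.Yx FullSCM.S FullSCM.T FullSCM.w
    simp only [Fintype.sum_prod_type]
    refine Finset.sum_congr rfl fun u1 _ => ?_
    rw [Finset.mul_sum]
    refine Finset.sum_congr rfl fun u2 _ => ?_
    have : ∀ (u5 : U5) (u6 : U6),
        (if (M.fY (M.fZ (M.fS (M.fT u6) u5) true u2) u1 = true ∧
              M.fY (M.fZ (M.fS (M.fT u6) u5) false u2) u1 = false)
          then M.p1 u1 * M.p2 u2 * M.p5 u5 * M.p6 u6 else 0)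
        = M.p1 u1 * M.p2 u2 * (M.p5 u5 * M.p6 u6 * g (M.fS (M.fT u6) u5) u1 u2) := by
      intro u5 u6
      simp only [hg]
      by_cases h : (M.fY (M.fZ (M.fS (M.fT u6) u5) true u2) u1 = true ∧
          M.fY (M.fZ (M.fS (M.fT u6) u5) false u2) u1 = false) <;> simp [h] <;> ring
    simp only [this]
    simp only [← Finset.mul_sum]
    rw [mul_assoc]
    congr 1
    have : ∀ (u5 : U5) (u6 : U6),
        M.p5 u5 * M.p6 u6 * g (M.fS (M.fT u6) u5) u1 u2
        = M.p5 u5 * M.p6 u6 * (if M.fS (M.fT u6) u5 = true then 1 else 0) * g true u1 u2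
          + M.p5 u5 * M.p6 u6 * (if M.fS (M.fT u6) u5 = true then 0 else 1) * g false u1 u2 := by
      intro u5 u6
      rw [hgdec (M.fS (M.fT u6) u5) u1 u2]
      ring
    simp only [this, Finset.sum_add_distrib, ← Finset.sum_mul]
    rw [← hA, hAc]
  -- RHS
  have hR : M'.P (fun u => M'.Yx true u = true ∧ M'.Yx false u = false)
      = ∑ u1 : U1, M.p1 u1 * ∑ u2 : U2, M.p2 u2 *
          (M'.gamma * g true u1 u2 + (1 - M'.gamma) * g false u1 u2) := by
    unfold ReducedSCM.P ReducedSCM.Yx ReducedSCM.S ReducedSCM.w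
    simp only [Fintype.sum_prod_type, hp1, hp2, hfZ, hfY]
    refine Finset.sum_congr rfl fun u1 _ => ?_
    rw [Finset.mul_sum]
    refine Finset.sum_congr rfl fun u2 _ => ?_
    rw [Fintype.sum_bool]
    simp only [hg]
    by_cases h1 : (M.fY (M.fZ true true u2) u1 = true ∧ M.fY (M.fZ true false u2) u1 = false) <;>
      by_cases h0 : (M.fY (M.fZ false true u2) u1 = true ∧ M.fY (M.fZ false false u2) u1 = false) <;>
      simp [h1, h0] <;> ring
  rw [hL, hR, hAg]
end

section
/- In any full SCM, the variables (X, Z, Y, Y_{X=0}, Y_{X=1}) are jointly conditionally independent of T given S: for every assignment (x, z, y, a, b, t, s) in {0,1}^7, P(X = x, Z = z, Y = y, Y_{X=0} = a, Y_{X=1} = b, T = t, S = s) · P(S = s) = P(X = x, Z = z, Y = y, Y_{X=0} = a, Y_{X=1} = b, S = s) · P(T = t, S = s). -/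
open Finset

attribute [local instance] Classical.propDecidable

/-- Factorization: the probability of an event that splits as a condition on
`(u1, u2)` and a condition on `(u5, u6)` is a product. -/
lemma FullSCM.P_factor
    {U1 U2 U5 U6 : Type} [Fintype U1] [Fintype U2] [Fintype U5] [Fintype U6]
    (M : FullSCM U1 U2 U5 U6) (g : U1 → U2 → Prop) (h : U5 → U6 → Prop) :
    M.P (fun u => g u.1 u.2.1 ∧ h u.2.2.1 u.2.2.2)
      = (∑ u1, ∑ u2, if g u1 u2 then M.p1 u1 * M.p2 u2 else 0)
        * (∑ u5, ∑ u6, if h u5 u6 then M.p5 u5 * M.p6 u6 else 0) := by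
  simp only [FullSCM.P, FullSCM.w, Fintype.sum_prod_type]
  rw [Finset.sum_mul]
  refine Finset.sum_congr rfl fun u1 _ => ?_
  rw [Finset.sum_mul]
  refine Finset.sum_congr rfl fun u2 _ => ?_
  rw [Finset.mul_sum]
  refine Finset.sum_congr rfl fun u5 _ => ?_
  rw [Finset.mul_sum]
  refine Finset.sum_congr rfl fun u6 _ => ?_
  by_cases hg : g u1 u2 <;> by_cases hh : h u5 u6 <;> simp [hg, hh] <;> ring

lemma FullSCM.p12_sum
    {U1 U2 U5 U6 : Type} [Fintype U1] [Fintype U2] [Fintype U5] [Fintype U6]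
    (M : FullSCM U1 U2 U5 U6) :
    (∑ u1, ∑ u2, if True then M.p1 u1 * M.p2 u2 else 0) = 1 := by
  simp only [if_true, ← Finset.mul_sum, M.p2_sum, mul_one, M.p1_sum]

/-- In any full SCM, `(X, Z, Y, Y_{X=0}, Y_{X=1})` is jointly
conditionally independent of `T` given `S`. -/
theorem cond_indep_of_T_given_S
    {U1 U2 U5 U6 : Type} [Fintype U1] [Fintype U2] [Fintype U5] [Fintype U6]
    (M : FullSCM U1 U2 U5 U6) :
    ∀ x z y a b t s : Bool,
      M.P (fun u => M.X u = x ∧ M.Z u = z ∧ M.Y u = y ∧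
            M.Yx false u = a ∧ M.Yx true u = b ∧ M.T u = t ∧ M.S u = s)
          * M.P (fun u => M.S u = s)
        = M.P (fun u => M.X u = x ∧ M.Z u = z ∧ M.Y u = y ∧
            M.Yx false u = a ∧ M.Yx true u = b ∧ M.S u = s)
          * M.P (fun u => M.T u = t ∧ M.S u = s) := by
  intro x z y a b t s
  have e1 : (fun u : U1 × U2 × U5 × U6 => M.X u = x ∧ M.Z u = z ∧ M.Y u = y ∧
      M.Yx false u = a ∧ M.Yx true u = b ∧ M.T u = t ∧ M.S u = s)
      = (fun u => (M.fX u.1 = x ∧ M.fZ s (M.fX u.1) u.2.1 = z ∧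
          M.fY (M.fZ s (M.fX u.1) u.2.1) u.1 = y ∧
          M.fY (M.fZ s false u.2.1) u.1 = a ∧ M.fY (M.fZ s true u.2.1) u.1 = b) ∧
          (M.fT u.2.2.2 = t ∧ M.fS (M.fT u.2.2.2) u.2.2.1 = s)) := by
    funext u
    simp only [FullSCM.X, FullSCM.Z, FullSCM.Y, FullSCM.Yx, FullSCM.T, FullSCM.S, eq_iff_iff]
    constructor
    · rintro ⟨h1, h2, h3, h4, h5, h6, h7⟩
      subst h7; exact ⟨⟨h1, h2, h3, h4, h5⟩, h6, rfl⟩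
    · rintro ⟨⟨h1, h2, h3, h4, h5⟩, h6, h7⟩
      subst h7; exact ⟨h1, h2, h3, h4, h5, h6, rfl⟩
  have e2 : (fun u : U1 × U2 × U5 × U6 => M.X u = x ∧ M.Z u = z ∧ M.Y u = y ∧
      M.Yx false u = a ∧ M.Yx true u = b ∧ M.S u = s)
      = (fun u => (M.fX u.1 = x ∧ M.fZ s (M.fX u.1) u.2.1 = z ∧
          M.fY (M.fZ s (M.fX u.1) u.2.1) u.1 = y ∧
          M.fY (M.fZ s false u.2.1) u.1 = a ∧ M.fY (M.fZ s true u.2.1) u.1 = b) ∧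
          (M.fS (M.fT u.2.2.2) u.2.2.1 = s)) := by
    funext u
    simp only [FullSCM.X, FullSCM.Z, FullSCM.Y, FullSCM.Yx, FullSCM.T, FullSCM.S, eq_iff_iff]
    constructor
    · rintro ⟨h1, h2, h3, h4, h5, h7⟩
      subst h7; exact ⟨⟨h1, h2, h3, h4, h5⟩, rfl⟩
    · rintro ⟨⟨h1, h2, h3, h4, h5⟩, h7⟩
      subst h7; exact ⟨h1, h2, h3, h4, h5, rfl⟩
  have e3 : (fun u : U1 × U2 × U5 × U6 => M.S u = s)
      = (fun u => True ∧ (M.fS (M.fT u.2.2.2) u.2.2.1 = s)) := by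
    funext u; simp [FullSCM.S, FullSCM.T]
  have e4 : (fun u : U1 × U2 × U5 × U6 => M.T u = t ∧ M.S u = s)
      = (fun u => True ∧ (M.fT u.2.2.2 = t ∧ M.fS (M.fT u.2.2.2) u.2.2.1 = s)) := by
    funext u; simp [FullSCM.S, FullSCM.T]
  rw [e1, e2, e3, e4,
    M.P_factor (fun u1 u2 => M.fX u1 = x ∧ M.fZ s (M.fX u1) u2 = z ∧
      M.fY (M.fZ s (M.fX u1) u2) u1 = y ∧ M.fY (M.fZ s false u2) u1 = a ∧
      M.fY (M.fZ s true u2) u1 = b)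
      (fun u5 u6 => M.fT u6 = t ∧ M.fS (M.fT u6) u5 = s),
    M.P_factor (fun u1 u2 => M.fX u1 = x ∧ M.fZ s (M.fX u1) u2 = z ∧
      M.fY (M.fZ s (M.fX u1) u2) u1 = y ∧ M.fY (M.fZ s false u2) u1 = a ∧
      M.fY (M.fZ s true u2) u1 = b)
      (fun u5 u6 => M.fS (M.fT u6) u5 = s),
    M.P_factor (fun _ _ => True) (fun u5 u6 => M.fS (M.fT u6) u5 = s),
    M.P_factor (fun _ _ => True) (fun u5 u6 => M.fT u6 = t ∧ M.fS (M.fT u6) u5 = s)]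
  ring
end

section
/- In any reduced SCM, for every x, y, z ∈ {0,1} such that P(X = x, Z = z) > 0, the following linear-constraint identity holds: Σ_{u1 with fX(u1) = x and fY(z, u1) = y} p1(u1) = P(Y = y | X = x, Z = z) · P(X = x). -/
open Finset

attribute [local instance] Classical.propDecidable

open ReducedSCM in
lemma split_sum {U1 U2 : Type} [Fintype U1] [Fintype U2]
    (M : ReducedSCM U1 U2) (Q : U1 → Prop) [DecidablePred Q]
    (R : U2 × Bool → Prop) [DecidablePred R] :
    M.P (fun u => Q u.1 ∧ R u.2)
      = (∑ u1 : U1, if Q u1 then M.p1 u1 else 0)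
        * (∑ v : U2 × Bool, if R v then M.p2 v.1 * (if v.2 then M.gamma else 1 - M.gamma) else 0) := by
  rw [ReducedSCM.P, Fintype.sum_prod_type, Finset.sum_mul_sum]
  refine Finset.sum_congr rfl fun u1 _ => Finset.sum_congr rfl fun v _ => ?_
  by_cases hQ : Q u1 <;> by_cases hR : R v <;>
    simp [hQ, hR, ReducedSCM.w, mul_assoc]

/-- In any reduced SCM, for `x, y, z` with `P(X = x, Z = z) > 0`,
`Σ_{u1 : fX(u1) = x, fY(z, u1) = y} p1(u1) = P(Y = y | X = x, Z = z) · P(X = x)`. -/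
theorem linear_constraint_U1 {U1 U2 : Type} [Fintype U1] [Fintype U2]
    (M : ReducedSCM U1 U2) (x y z : Bool)
    (hpos : 0 < M.P (fun u => M.X u = x ∧ M.Z u = z)) :
    (∑ u1 : U1, if M.fX u1 = x ∧ M.fY z u1 = y then M.p1 u1 else 0)
      = M.Pcond (fun u => M.Y u = y) (fun u => M.X u = x ∧ M.Z u = z)
        * M.P (fun u => M.X u = x) := by
  have hXZ : M.P (fun u => M.X u = x ∧ M.Z u = z)
      = (∑ u1 : U1, if M.fX u1 = x then M.p1 u1 else 0)
        * (∑ v : U2 × Bool, if M.fZ v.2 x v.1 = z then M.p2 v.1 * (if v.2 then M.gamma else 1 - M.gamma) else 0) := by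
    refine Eq.trans ?_ (split_sum M (fun u1 => M.fX u1 = x) (fun v => M.fZ v.2 x v.1 = z))
    rw [ReducedSCM.P, ReducedSCM.P]
    refine Finset.sum_congr rfl fun u _ => ?_
    have : (M.X u = x ∧ M.Z u = z) ↔ (M.fX u.1 = x ∧ M.fZ u.2.2 x u.2.1 = z) := by
      constructor
      · rintro ⟨h1, h2⟩
        have h1' : M.fX u.1 = x := h1
        refine ⟨h1, ?_⟩
        rw [← h1']; exact h2
      · rintro ⟨h1, h2⟩
        have h1' : M.fX u.1 = x := h1
        refine ⟨h1, ?_⟩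
        show M.fZ u.2.2 (M.fX u.1) u.2.1 = z
        rw [h1']; exact h2
    simp [this]
  have hYXZ : M.P (fun u => M.Y u = y ∧ (M.X u = x ∧ M.Z u = z))
      = (∑ u1 : U1, if M.fX u1 = x ∧ M.fY z u1 = y then M.p1 u1 else 0)
        * (∑ v : U2 × Bool, if M.fZ v.2 x v.1 = z then M.p2 v.1 * (if v.2 then M.gamma else 1 - M.gamma) else 0) := by
    refine Eq.trans ?_ (split_sum M (fun u1 => M.fX u1 = x ∧ M.fY z u1 = y) (fun v => M.fZ v.2 x v.1 = z))
    rw [ReducedSCM.P, ReducedSCM.P]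
    refine Finset.sum_congr rfl fun u _ => ?_
    have : (M.Y u = y ∧ (M.X u = x ∧ M.Z u = z))
        ↔ ((M.fX u.1 = x ∧ M.fY z u.1 = y) ∧ M.fZ u.2.2 x u.2.1 = z) := by
      constructor
      · rintro ⟨hy, h1, h2⟩
        have h1' : M.fX u.1 = x := h1
        have hz : M.fZ u.2.2 x u.2.1 = z := by rw [← h1']; exact h2
        have hy' : M.fY (M.fZ u.2.2 (M.fX u.1) u.2.1) u.1 = y := hy
        rw [h1', hz] at hy'
        exact ⟨⟨h1, hy'⟩, hz⟩
      · rintro ⟨⟨h1, hy⟩, hz⟩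
        have h1' : M.fX u.1 = x := h1
        have h2 : M.Z u = z := by
          show M.fZ u.2.2 (M.fX u.1) u.2.1 = z
          rw [h1']; exact hz
        have h2' : M.fZ u.2.2 (M.fX u.1) u.2.1 = z := h2
        refine ⟨?_, h1, h2⟩
        show M.fY (M.fZ u.2.2 (M.fX u.1) u.2.1) u.1 = y
        rw [h2']; exact hy
    simp [this]
  have hX : M.P (fun u => M.X u = x) = (∑ u1 : U1, if M.fX u1 = x then M.p1 u1 else 0) := by
    have h0 : M.P (fun u => M.X u = x) = M.P (fun u : U1 × U2 × Bool => M.fX u.1 = x ∧ True) := by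
      simp [ReducedSCM.X]
    refine h0.trans ((split_sum M (fun u1 => M.fX u1 = x) (fun _ => True)).trans ?_)
    simp only [if_true, Fintype.sum_prod_type]
    have h1 : ∀ a : U2, ∑ b : Bool, M.p2 a * (if b then M.gamma else 1 - M.gamma) = M.p2 a := by
      intro a; simp [Fintype.sum_bool]; ring
    rw [Finset.sum_congr rfl fun a _ => h1 a, M.p2_sum, mul_one]
  set A := ∑ u1 : U1, if M.fX u1 = x ∧ M.fY z u1 = y then M.p1 u1 else 0 with hA
  set B := ∑ u1 : U1, if M.fX u1 = x then M.p1 u1 else 0 with hB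
  set C := ∑ v : U2 × Bool, if M.fZ v.2 x v.1 = z then M.p2 v.1 * (if v.2 then M.gamma else 1 - M.gamma) else 0 with hC
  have hBC : B * C ≠ 0 := by rw [← hXZ]; exact ne_of_gt hpos
  have hBne : B ≠ 0 := fun h => hBC (by simp [h])
  have hCne : C ≠ 0 := fun h => hBC (by simp [h])
  rw [ReducedSCM.Pcond, hYXZ, hXZ, hX]
  field_simp
end

section
/- In any reduced SCM, the joint observational distribution factorizes over c-components: for every x, y, z, s ∈ {0,1} such that P(S = s, X = x) > 0 and P(X = x, Z = z) > 0, P(X = x, Y = y, Z = z, S = s) = P(S = s) · P(X = x) · P(Z = z | S = s, X = x) · P(Y = y | X = x, Z = z). -/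
open Finset

attribute [local instance] Classical.propDecidable

namespace ReducedSCM

variable {U1 U2 : Type} [Fintype U1] [Fintype U2]

lemma P_factor (M : ReducedSCM U1 U2) (Q1 : U1 → Prop) (Q2 : Bool → U2 → Prop)
    (Q3 : Bool → Prop) (E : U1 × U2 × Bool → Prop)
    (h : ∀ u, E u ↔ Q1 u.1 ∧ Q2 u.2.2 u.2.1 ∧ Q3 u.2.2) :
    M.P E = (∑ u1, if Q1 u1 then M.p1 u1 else 0) *
      ∑ t : Bool, (if Q3 t then (if t then M.gamma else 1 - M.gamma) else 0) *
        ∑ u2, if Q2 t u2 then M.p2 u2 else 0 := by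
  unfold P w
  rw [Fintype.sum_prod_type]
  simp only [h]
  have key : ∀ (u1 : U1) (v : U2 × Bool),
      (if Q1 u1 ∧ Q2 v.2 v.1 ∧ Q3 v.2 then
        M.p1 u1 * M.p2 v.1 * (if v.2 then M.gamma else 1 - M.gamma) else 0)
      = (if Q1 u1 then M.p1 u1 else 0) *
        ((if Q3 v.2 then (if v.2 then M.gamma else 1 - M.gamma) else 0) *
          (if Q2 v.2 v.1 then M.p2 v.1 else 0)) := by
    intro u1 v
    by_cases h1 : Q1 u1 <;> by_cases h2 : Q2 v.2 v.1 <;> by_cases h3 : Q3 v.2 <;>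
      simp [h1, h2, h3] <;> ring
  simp only [key, ← Finset.mul_sum]
  rw [← Finset.sum_mul]
  congr 1
  rw [Fintype.sum_prod_type, Finset.sum_comm]
  exact Finset.sum_congr rfl fun t _ => by simp [Finset.mul_sum]

end ReducedSCM

/-- In any reduced SCM the joint observational distribution
factorizes over c-components:
`P(X, Y, Z, S) = P(S) · P(X) · P(Z | S, X) · P(Y | X, Z)`. -/
theorem c_component_factorization {U1 U2 : Type} [Fintype U1] [Fintype U2]
    (M : ReducedSCM U1 U2) (x y z s : Bool)
    (hpos1 : 0 < M.P (fun u => M.S u = s ∧ M.X u = x))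
    (hpos2 : 0 < M.P (fun u => M.X u = x ∧ M.Z u = z)) :
    M.P (fun u => M.X u = x ∧ M.Y u = y ∧ M.Z u = z ∧ M.S u = s)
      = M.P (fun u => M.S u = s) * M.P (fun u => M.X u = x)
        * M.Pcond (fun u => M.Z u = z) (fun u => M.S u = s ∧ M.X u = x)
        * M.Pcond (fun u => M.Y u = y) (fun u => M.X u = x ∧ M.Z u = z) := by
  classical
  set A : ℝ := ∑ u1, if M.fX u1 = x then M.p1 u1 else 0 with hA
  set A' : ℝ := ∑ u1, if M.fX u1 = x ∧ M.fY z u1 = y then M.p1 u1 else 0 with hA'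
  set B : Bool → ℝ := fun t => ∑ u2, if M.fZ t x u2 = z then M.p2 u2 else 0 with hB
  set g : Bool → ℝ := fun t => if t then M.gamma else 1 - M.gamma with hg
  set C : ℝ := g true * B true + g false * B false with hC
  -- P(S = s)
  have hS : M.P (fun u => M.S u = s) = g s := by
    rw [M.P_factor (fun _ => True) (fun _ _ => True) (fun t => t = s) _
      (by intro u; simp [ReducedSCM.S])]
    simp [M.p1_sum, M.p2_sum, Fintype.sum_bool, hg]
    cases s <;> simp
  -- P(X = x)
  have hX : M.P (fun u => M.X u = x) = A := by
    rw [M.P_factor (fun u1 => M.fX u1 = x) (fun _ _ => True) (fun _ => True) _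
      (by intro u; simp [ReducedSCM.X])]
    simp [M.p2_sum, Fintype.sum_bool, hg, hA]
    ring
  -- P(S = s ∧ X = x)
  have hSX : M.P (fun u => M.S u = s ∧ M.X u = x) = g s * A := by
    rw [M.P_factor (fun u1 => M.fX u1 = x) (fun _ _ => True) (fun t => t = s) _
      (by intro u; simp [ReducedSCM.S, ReducedSCM.X]; tauto)]
    simp [M.p2_sum, Fintype.sum_bool, hg, hA]
    cases s <;> simp <;> ring
  -- P(Z = z ∧ (S = s ∧ X = x))
  have hZSX : M.P (fun u => M.Z u = z ∧ (M.S u = s ∧ M.X u = x)) = A * (g s * B s) := by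
    rw [M.P_factor (fun u1 => M.fX u1 = x) (fun t u2 => M.fZ t x u2 = z) (fun t => t = s) _ ?_]
    · simp [Fintype.sum_bool, hg, hA, hB]
      cases s <;> simp <;> ring
    · intro u
      simp only [ReducedSCM.S, ReducedSCM.X, ReducedSCM.Z]
      constructor <;> intro h <;> aesop
  -- P(X = x ∧ Z = z)
  have hXZ : M.P (fun u => M.X u = x ∧ M.Z u = z) = A * C := by
    rw [M.P_factor (fun u1 => M.fX u1 = x) (fun t u2 => M.fZ t x u2 = z) (fun _ => True) _ ?_]
    · simp [Fintype.sum_bool, hg, hA, hB, hC]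
      ring
    · intro u
      simp only [ReducedSCM.X, ReducedSCM.Z]
      constructor <;> intro h <;> aesop
  -- P(Y = y ∧ (X = x ∧ Z = z))
  have hYXZ : M.P (fun u => M.Y u = y ∧ (M.X u = x ∧ M.Z u = z)) = A' * C := by
    rw [M.P_factor (fun u1 => M.fX u1 = x ∧ M.fY z u1 = y)
        (fun t u2 => M.fZ t x u2 = z) (fun _ => True) _ ?_]
    · simp [Fintype.sum_bool, hg, hA', hB, hC]
      ring
    · rintro ⟨u1, u2, t⟩
      simp only [ReducedSCM.X, ReducedSCM.Y, ReducedSCM.Z, ReducedSCM.S]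
      constructor
      · rintro ⟨h1, h2, h3⟩
        rw [h2] at h1 h3
        rw [h3] at h1
        exact ⟨⟨h2, h1⟩, h3, trivial⟩
      · rintro ⟨⟨h1, h2⟩, h3, -⟩
        rw [h1, h3]
        exact ⟨h2, rfl, rfl⟩
  -- LHS
  have hL : M.P (fun u => M.X u = x ∧ M.Y u = y ∧ M.Z u = z ∧ M.S u = s)
      = A' * (g s * B s) := by
    rw [M.P_factor (fun u1 => M.fX u1 = x ∧ M.fY z u1 = y)
        (fun t u2 => M.fZ t x u2 = z) (fun t => t = s) _ ?_]
    · simp [Fintype.sum_bool, hg, hA', hB]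
      cases s <;> simp <;> ring
    · rintro ⟨u1, u2, t⟩
      simp only [ReducedSCM.X, ReducedSCM.Y, ReducedSCM.Z, ReducedSCM.S]
      constructor
      · rintro ⟨h1, h2, h3, h4⟩
        rw [h1] at h2 h3
        rw [h3] at h2
        exact ⟨⟨h1, h2⟩, h3, h4⟩
      · rintro ⟨⟨h1, h2⟩, h3, h4⟩
        subst h4
        rw [h1, h3]
        exact ⟨rfl, h2, rfl, rfl⟩
  have hgA : 0 < g s * A := by rw [← hSX]; exact hpos1
  have hAC : 0 < A * C := by rw [← hXZ]; exact hpos2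
  have hgA0 : g s * A ≠ 0 := ne_of_gt hgA
  have hAC0 : A * C ≠ 0 := ne_of_gt hAC
  have hA0 : A ≠ 0 := left_ne_zero_of_mul hAC0
  have hC0 : C ≠ 0 := right_ne_zero_of_mul hAC0
  rw [hL, hS, hX, ReducedSCM.Pcond, ReducedSCM.Pcond, hZSX, hSX, hYXZ, hXZ]
  field_simp
end

section
/- For every reduced SCM M' with parameter γ there exist nonnegative vectors q1 ∈ ℝ^8 and q2 ∈ ℝ^16, each summing to 1, such that the canonical reduced SCM with parameters (q1, q2, γ) induces exactly the same joint distribution of (X, Z, Y, S, Y_{X=0}, Y_{X=1}) as M'. In particular, canonicalization preserves the observational distribution and the values of PN, PS, and PNS. -/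
open Finset

attribute [local instance] Classical.propDecidable

/-- Canonical mechanism for `X`: `fX(j) = 1` iff `j ≥ 4`. -/
def fXc (j : Fin 8) : Bool := decide (4 ≤ (j : ℕ))

/-- Canonical mechanism for `Y`: by the value of `j mod 4`, `Y` is `0`, `z`,
`1 - z`, or `1`. -/
def fYc (z : Bool) (j : Fin 8) : Bool :=
  if (j : ℕ) % 4 = 0 then false
  else if (j : ℕ) % 4 = 1 then z
  else if (j : ℕ) % 4 = 2 then !z
  else true

/-- Canonical mechanism for `Z`: writing `k = 8·b0 + 4·b1 + 2·b2 + b3`,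
`fZ(s, x, k) = b_{2s+x}`. -/
def fZc (s x : Bool) (k : Fin 16) : Bool :=
  Nat.testBit (k : ℕ) (3 - (2 * s.toNat + x.toNat))

/-- `h1 = (1−γ)(q2_4 + q2_5 + q2_6 + q2_7) + γ(q2_1 + q2_5 + q2_9 + q2_13)`. -/
def h1 (q2 : Fin 16 → ℝ) (γ : ℝ) : ℝ :=
  (1 - γ) * (q2 4 + q2 5 + q2 6 + q2 7) + γ * (q2 1 + q2 5 + q2 9 + q2 13)

/-- `h2 = (1−γ)(q2_8 + q2_9 + q2_10 + q2_11) + γ(q2_2 + q2_6 + q2_10 + q2_14)`. -/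
def h2 (q2 : Fin 16 → ℝ) (γ : ℝ) : ℝ :=
  (1 - γ) * (q2 8 + q2 9 + q2 10 + q2 11) + γ * (q2 2 + q2 6 + q2 10 + q2 14)

/-- The canonical reduced SCM with parameters `(q1, q2, γ)`. -/
def canonicalSCM (q1 : Fin 8 → ℝ) (q2 : Fin 16 → ℝ) (γ : ℝ)
    (hq1 : ∀ j, 0 ≤ q1 j) (hs1 : ∑ j, q1 j = 1)
    (hq2 : ∀ k, 0 ≤ q2 k) (hs2 : ∑ k, q2 k = 1)
    (hγ0 : 0 ≤ γ) (hγ1 : γ ≤ 1) : ReducedSCM (Fin 8) (Fin 16) where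
  p1 := q1
  p2 := q2
  gamma := γ
  p1_nonneg := hq1
  p2_nonneg := hq2
  p1_sum := hs1
  p2_sum := hs2
  gamma_nonneg := hγ0
  gamma_le_one := hγ1
  fX := fXc
  fZ := fZc
  fY := fYc


section Canonicalization

variable {U1 U2 : Type} [Fintype U1] [Fintype U2]

/-- Index of `u1` in the canonical `U1`. -/
def idx1 (M : ReducedSCM U1 U2) (u : U1) : Fin 8 :=
  ⟨4 * (M.fX u).toNat + 2 * (M.fY false u).toNat + (M.fY true u).toNat, by
    have h1 := Bool.toNat_le (M.fX u)
    have h2 := Bool.toNat_le (M.fY false u)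
    have h3 := Bool.toNat_le (M.fY true u)
    omega⟩

/-- Index of `u2` in the canonical `U2`. -/
def idx2 (M : ReducedSCM U1 U2) (u : U2) : Fin 16 :=
  ⟨8 * (M.fZ false false u).toNat + 4 * (M.fZ false true u).toNat +
      2 * (M.fZ true false u).toNat + (M.fZ true true u).toNat, by
    have h1 := Bool.toNat_le (M.fZ false false u)
    have h2 := Bool.toNat_le (M.fZ false true u)
    have h3 := Bool.toNat_le (M.fZ true false u)
    have h4 := Bool.toNat_le (M.fZ true true u)
    omega⟩

lemma idx1_fX (M : ReducedSCM U1 U2) (u : U1) : fXc (idx1 M u) = M.fX u := by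
  cases hx : M.fX u <;> cases h0 : M.fY false u <;> cases h1 : M.fY true u <;>
    simp [idx1, fXc, hx, h0, h1] <;> decide

lemma idx1_fY (M : ReducedSCM U1 U2) (z : Bool) (u : U1) :
    fYc z (idx1 M u) = M.fY z u := by
  cases z <;> cases hx : M.fX u <;> cases h0 : M.fY false u <;> cases h1 : M.fY true u <;>
    simp [idx1, fYc, hx, h0, h1] <;> decide

lemma idx2_fZ (M : ReducedSCM U1 U2) (s x : Bool) (u : U2) :
    fZc s x (idx2 M u) = M.fZ s x u := by
  cases s <;> cases x <;> cases h00 : M.fZ false false u <;> cases h01 : M.fZ false true u <;>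
    cases h10 : M.fZ true false u <;> cases h11 : M.fZ true true u <;>
    simp [idx2, fZc, h00, h01, h10, h11] <;> decide

lemma sum_push {A B : Type*} [Fintype A] [Fintype B] [DecidableEq B]
    (g : A → B) (p : A → ℝ) (E : B → Prop) [DecidablePred E] :
    ∑ b, (if E b then (∑ a, if g a = b then p a else 0) else 0)
      = ∑ a, if E (g a) then p a else 0 := by
  have h : ∀ b : B, (if E b then (∑ a, if g a = b then p a else 0) else 0)
      = ∑ a, if g a = b then (if E b then p a else 0) else 0 := by
    intro b; split <;> simp
  simp only [h]
  rw [Finset.sum_comm]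
  refine Finset.sum_congr rfl fun a _ => ?_
  simp

end Canonicalization

/-- Every reduced SCM `M'` with parameter `γ` admits canonical
parameters `(q1, q2)` such that the canonical reduced SCM with parameters
`(q1, q2, γ)` induces the same joint distribution of
`(X, Z, Y, S, Y_{X=0}, Y_{X=1})` as `M'`. -/
theorem canonicalization_exists {U1 U2 : Type} [Fintype U1] [Fintype U2]
    (M' : ReducedSCM U1 U2) :
    ∃ (q1 : Fin 8 → ℝ) (q2 : Fin 16 → ℝ)
      (hq1 : ∀ j, 0 ≤ q1 j) (hs1 : ∑ j, q1 j = 1)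
      (hq2 : ∀ k, 0 ≤ q2 k) (hs2 : ∑ k, q2 k = 1),
      ∀ x z y s a b : Bool,
        (canonicalSCM q1 q2 M'.gamma hq1 hs1 hq2 hs2
            M'.gamma_nonneg M'.gamma_le_one).P
          (fun u => fXc u.1 = x ∧ fZc u.2.2 (fXc u.1) u.2.1 = z ∧
            fYc (fZc u.2.2 (fXc u.1) u.2.1) u.1 = y ∧ u.2.2 = s ∧
            fYc (fZc u.2.2 false u.2.1) u.1 = a ∧
            fYc (fZc u.2.2 true u.2.1) u.1 = b)
          = M'.P (fun u => M'.X u = x ∧ M'.Z u = z ∧ M'.Y u = y ∧ M'.S u = s ∧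
              M'.Yx false u = a ∧ M'.Yx true u = b) := by
  classical
  let q1 : Fin 8 → ℝ := fun j => ∑ u : U1, if idx1 M' u = j then M'.p1 u else 0
  let q2 : Fin 16 → ℝ := fun k => ∑ u : U2, if idx2 M' u = k then M'.p2 u else 0
  have hq1 : ∀ j, 0 ≤ q1 j := fun j => Finset.sum_nonneg fun u _ => by
    split
    · exact M'.p1_nonneg u
    · exact le_refl 0
  have hq2 : ∀ k, 0 ≤ q2 k := fun k => Finset.sum_nonneg fun u _ => by
    split
    · exact M'.p2_nonneg u
    · exact le_refl 0
  have hs1 : ∑ j, q1 j = 1 := by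
    show (∑ j, ∑ u : U1, if idx1 M' u = j then M'.p1 u else 0) = 1
    rw [Finset.sum_comm]
    simp [M'.p1_sum]
  have hs2 : ∑ k, q2 k = 1 := by
    show (∑ k, ∑ u : U2, if idx2 M' u = k then M'.p2 u else 0) = 1
    rw [Finset.sum_comm]
    simp [M'.p2_sum]
  refine ⟨q1, q2, hq1, hs1, hq2, hs2, ?_⟩
  intro x z y s a b
  set γ := M'.gamma with hγ
  set Mc := canonicalSCM q1 q2 γ hq1 hs1 hq2 hs2 M'.gamma_nonneg M'.gamma_le_one with hMc
  set g : U1 × U2 × Bool → Fin 8 × Fin 16 × Bool :=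
    fun u => (idx1 M' u.1, idx2 M' u.2.1, u.2.2) with hg
  have hW : ∀ v : Fin 8 × Fin 16 × Bool,
      Mc.w v = ∑ u : U1 × U2 × Bool, if g u = v then M'.w u else 0 := by
    rintro ⟨j, k, s'⟩
    show q1 j * q2 k * (if s' then γ else 1 - γ) = _
    rw [Fintype.sum_prod_type]
    simp only [Fintype.sum_prod_type]
    rw [Finset.sum_mul_sum (f := fun u => if idx1 M' u = j then M'.p1 u else 0)
          (g := fun u => if idx2 M' u = k then M'.p2 u else 0), Finset.sum_mul]
    refine Finset.sum_congr rfl fun u1 _ => ?_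
    rw [Finset.sum_mul]
    refine Finset.sum_congr rfl fun u2 _ => ?_
    show _ = ∑ s'' : Bool, if g (u1, u2, s'') = (j, k, s') then M'.w (u1, u2, s'') else 0
    simp only [hg, Prod.mk.injEq, ReducedSCM.w]
    by_cases h1 : idx1 M' u1 = j <;> by_cases h2 : idx2 M' u2 = k <;>
      simp [h1, h2, Finset.sum_ite_eq', mul_assoc, hγ]
  -- the event on the canonical side
  set E : Fin 8 × Fin 16 × Bool → Prop := fun u =>
    fXc u.1 = x ∧ fZc u.2.2 (fXc u.1) u.2.1 = z ∧
      fYc (fZc u.2.2 (fXc u.1) u.2.1) u.1 = y ∧ u.2.2 = s ∧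
      fYc (fZc u.2.2 false u.2.1) u.1 = a ∧
      fYc (fZc u.2.2 true u.2.1) u.1 = b with hE
  have hEg : ∀ u : U1 × U2 × Bool,
      E (g u) ↔ (M'.X u = x ∧ M'.Z u = z ∧ M'.Y u = y ∧ M'.S u = s ∧
        M'.Yx false u = a ∧ M'.Yx true u = b) := by
    rintro ⟨u1, u2, s''⟩
    simp only [hE, hg, idx1_fX, idx2_fZ, idx1_fY, ReducedSCM.X, ReducedSCM.Z,
      ReducedSCM.Y, ReducedSCM.S, ReducedSCM.Yx]
  show Mc.P E = _
  simp only [ReducedSCM.P]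
  simp only [hW]
  rw [sum_push g M'.w E]
  exact Finset.sum_congr rfl fun u _ => by simp only [hEg]; congr
end

section
/- In any front-door SCM with P(X = x, Z = z) > 0 for all x, z ∈ {0,1}, the weak probability of sufficiency is identified by the front-door formula: P(Y = 1 | do(X = 1)) = Σ_{z ∈ {0,1}} P(Z = z | X = 1) · Σ_{x ∈ {0,1}} P(Y = 1 | X = x, Z = z) · P(X = x). -/
open Finset

attribute [local instance] Classical.propDecidable

/-- A front-door SCM (Pearl's Smoking/Tar/Cancer example): exogenous `U1`
confounding `X` and `Y`, exogenous `U2` for `Z`, mechanisms `fX`, `fZ`, `fY`. -/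
structure FrontdoorSCM (U1 U2 : Type) [Fintype U1] [Fintype U2] where
  p1 : U1 → ℝ
  p2 : U2 → ℝ
  p1_nonneg : ∀ u, 0 ≤ p1 u
  p2_nonneg : ∀ u, 0 ≤ p2 u
  p1_sum : ∑ u, p1 u = 1
  p2_sum : ∑ u, p2 u = 1
  fX : U1 → Bool
  fZ : Bool → U2 → Bool
  fY : Bool → U1 → Bool

namespace FrontdoorSCM

variable {U1 U2 : Type} [Fintype U1] [Fintype U2]

/-- Probability of a unit `(u1, u2)`. -/
def w (M : FrontdoorSCM U1 U2) (u : U1 × U2) : ℝ := M.p1 u.1 * M.p2 u.2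

/-- Observational probability of an event. -/
noncomputable def P (M : FrontdoorSCM U1 U2) (E : U1 × U2 → Prop) : ℝ :=
  ∑ u, if E u then M.w u else 0

/-- Conditional probability `P(A | B)`. -/
noncomputable def Pcond (M : FrontdoorSCM U1 U2) (A B : U1 × U2 → Prop) : ℝ :=
  M.P (fun u => A u ∧ B u) / M.P B

def X (M : FrontdoorSCM U1 U2) (u : U1 × U2) : Bool := M.fX u.1

def Z (M : FrontdoorSCM U1 U2) (u : U1 × U2) : Bool := M.fZ (M.X u) u.2

def Y (M : FrontdoorSCM U1 U2) (u : U1 × U2) : Bool := M.fY (M.Z u) u.1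

/-- Interventional probability `P(Y = y | do(X = x))`. -/
noncomputable def Pdo (M : FrontdoorSCM U1 U2) (x y : Bool) : ℝ :=
  ∑ u : U1 × U2, if M.fY (M.fZ x u.2) u.1 = y then M.w u else 0

end FrontdoorSCM


namespace FrontdoorSCM
variable {U1 U2 : Type} [Fintype U1] [Fintype U2] (M : FrontdoorSCM U1 U2)

private noncomputable def A (x : Bool) : ℝ := ∑ u1, if M.fX u1 = x then M.p1 u1 else 0
private noncomputable def B (x z : Bool) : ℝ := ∑ u2, if M.fZ x u2 = z then M.p2 u2 else 0
private noncomputable def C (z : Bool) : ℝ := ∑ u1, if M.fY z u1 = true then M.p1 u1 else 0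
private noncomputable def D (x z : Bool) : ℝ :=
  ∑ u1, if M.fX u1 = x ∧ M.fY z u1 = true then M.p1 u1 else 0

private lemma P_X (x : Bool) : M.P (fun u => M.X u = x) = M.A x := by
  unfold P w X A
  rw [Fintype.sum_prod_type]
  apply Finset.sum_congr rfl; intro a _
  by_cases h : M.fX a = x <;> simp [h, ← Finset.mul_sum, M.p2_sum]

private lemma P_XZ (x z : Bool) :
    M.P (fun u => M.X u = x ∧ M.Z u = z) = M.A x * M.B x z := by
  unfold P w X Z A B
  rw [Fintype.sum_prod_type, Finset.sum_mul_sum]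
  apply Finset.sum_congr rfl; intro a _
  apply Finset.sum_congr rfl; intro b _
  unfold X
  split_ifs <;> simp_all

private lemma P_ZX (x z : Bool) :
    M.P (fun u => M.Z u = z ∧ M.X u = x) = M.A x * M.B x z := by
  rw [← M.P_XZ x z]
  unfold P
  apply Finset.sum_congr rfl; intro u _
  split_ifs <;> tauto

private lemma P_YXZ (x z : Bool) :
    M.P (fun u => M.Y u = true ∧ M.X u = x ∧ M.Z u = z) = M.D x z * M.B x z := by
  unfold P w Y Z X D B
  rw [Fintype.sum_prod_type, Finset.sum_mul_sum]
  apply Finset.sum_congr rfl; intro a _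
  apply Finset.sum_congr rfl; intro b _
  split_ifs with h1 h2 h3 <;>
    first
      | rfl
      | (obtain ⟨hy, hx, hz⟩ := h1; subst hx; rw [hz] at hy; simp_all)
      | (exfalso; apply h1; obtain ⟨hx, hy⟩ := h2; subst hx; rw [h3]; exact ⟨by rw [h3]; exact hy, rfl, h3⟩)
      | simp_all

private lemma Pdo_eq : M.Pdo true true = ∑ z : Bool, M.C z * M.B true z := by
  unfold Pdo
  have h : ∀ u : U1 × U2, (if M.fY (M.fZ true u.2) u.1 = true then M.w u else 0)
      = ∑ z : Bool, if M.fY z u.1 = true ∧ M.fZ true u.2 = z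
          then M.p1 u.1 * M.p2 u.2 else 0 := by
    intro u
    rw [Fintype.sum_bool]
    cases h2 : M.fZ true u.2 <;> simp [h2, w]
  rw [Finset.sum_congr rfl fun u _ => h u, Finset.sum_comm]
  apply Finset.sum_congr rfl; intro z _
  unfold C B
  rw [Fintype.sum_prod_type, Finset.sum_mul_sum]
  apply Finset.sum_congr rfl; intro a _
  apply Finset.sum_congr rfl; intro b _
  split_ifs <;> simp_all

private lemma sum_D (z : Bool) : ∑ x : Bool, M.D x z = M.C z := by
  unfold D C
  rw [Finset.sum_comm]
  refine Finset.sum_congr rfl fun u1 _ => ?_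
  rw [Fintype.sum_bool]
  cases hx : M.fX u1 <;> cases hy : M.fY z u1 <;> simp [hx, hy]

end FrontdoorSCM

/-- In any front-door SCM with `P(X = x, Z = z) > 0` for all
`x, z`, the weak probability of sufficiency is identified by the front-door
formula:
`P(Y = 1 | do(X = 1)) = Σ_z P(Z = z | X = 1) · Σ_x P(Y = 1 | X = x, Z = z) · P(X = x)`. -/
theorem frontdoor_wPS {U1 U2 : Type} [Fintype U1] [Fintype U2]
    (M : FrontdoorSCM U1 U2)
    (hpos : ∀ x z : Bool, 0 < M.P (fun u => M.X u = x ∧ M.Z u = z)) :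
    M.Pdo true true
      = ∑ z : Bool,
          M.Pcond (fun u => M.Z u = z) (fun u => M.X u = true)
            * ∑ x : Bool,
                M.Pcond (fun u => M.Y u = true) (fun u => M.X u = x ∧ M.Z u = z)
                  * M.P (fun u => M.X u = x) := by

  have hA0 : ∀ x, 0 ≤ M.A x := fun x =>
    Finset.sum_nonneg fun u _ => by split_ifs <;> simp [M.p1_nonneg]
  have hB0 : ∀ x z, 0 ≤ M.B x z := fun x z =>
    Finset.sum_nonneg fun u _ => by split_ifs <;> simp [M.p2_nonneg]
  have hABpos : ∀ x z, 0 < M.A x * M.B x z := fun x z => by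
    rw [← M.P_XZ]; exact hpos x z
  have hApos : ∀ x, 0 < M.A x := fun x => by
    rcases mul_pos_iff.mp (hABpos x true) with ⟨h, _⟩ | ⟨h, _⟩
    · exact h
    · linarith [hA0 x]
  have hBpos : ∀ x z, 0 < M.B x z := fun x z => by
    rcases mul_pos_iff.mp (hABpos x z) with ⟨_, h⟩ | ⟨_, h⟩
    · exact h
    · linarith [hB0 x z]
  rw [M.Pdo_eq]
  refine Finset.sum_congr rfl fun z _ => ?_
  have h1 : M.Pcond (fun u => M.Z u = z) (fun u => M.X u = true) = M.B true z := by
    simp only [FrontdoorSCM.Pcond]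
    rw [M.P_ZX, M.P_X, mul_comm]
    exact mul_div_cancel_right₀ _ (ne_of_gt (hApos true))
  have h2 : ∀ x, M.Pcond (fun u => M.Y u = true) (fun u => M.X u = x ∧ M.Z u = z)
      * M.P (fun u => M.X u = x) = M.D x z := by
    intro x
    simp only [FrontdoorSCM.Pcond]
    rw [M.P_YXZ, M.P_XZ, M.P_X]
    have ha := (hApos x).ne'
    have hb := (hBpos x z).ne'
    field_simp
  rw [h1, Finset.sum_congr rfl fun x _ => h2 x, M.sum_D, mul_comm]
end

section
/- In any front-door SCM with P(X = x, Z = z) > 0 for all x, z ∈ {0,1}, the weak probability of necessity is identified by the front-door formula: P(Y = 0 | do(X = 0)) = Σ_{z ∈ {0,1}} P(Z = z | X = 0) · Σ_{x ∈ {0,1}} P(Y = 0 | X = x, Z = z) · P(X = x). -/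
open Finset

attribute [local instance] Classical.propDecidable

/-- In any front-door SCM with `P(X = x, Z = z) > 0` for all
`x, z`, the weak probability of necessity is identified by the front-door
formula:
`P(Y = 0 | do(X = 0)) = Σ_z P(Z = z | X = 0) · Σ_x P(Y = 0 | X = x, Z = z) · P(X = x)`. -/
theorem frontdoor_wPN {U1 U2 : Type} [Fintype U1] [Fintype U2]
    (M : FrontdoorSCM U1 U2)
    (hpos : ∀ x z : Bool, 0 < M.P (fun u => M.X u = x ∧ M.Z u = z)) :
    M.Pdo false false
      = ∑ z : Bool,
          M.Pcond (fun u => M.Z u = z) (fun u => M.X u = false)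
            * ∑ x : Bool,
                M.Pcond (fun u => M.Y u = false) (fun u => M.X u = x ∧ M.Z u = z)
                  * M.P (fun u => M.X u = x) := by
  classical
  set a : Bool → ℝ := fun x => ∑ u1, if M.fX u1 = x then M.p1 u1 else 0 with ha
  set b : Bool → Bool → ℝ :=
    fun x z => ∑ u2, if M.fZ x u2 = z then M.p2 u2 else 0 with hb
  set c : Bool → Bool → ℝ :=
    fun x z => ∑ u1, if M.fX u1 = x ∧ M.fY z u1 = false then M.p1 u1 else 0 with hc
  set d : Bool → ℝ := fun z => ∑ u1, if M.fY z u1 = false then M.p1 u1 else 0 with hd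
  have hPX : ∀ x, M.P (fun u => M.X u = x) = a x := by
    intro x
    simp only [FrontdoorSCM.P, FrontdoorSCM.w, FrontdoorSCM.X, Fintype.sum_prod_type, ha]
    refine Finset.sum_congr rfl fun u1 _ => ?_
    by_cases h : M.fX u1 = x
    · simp [h, ← Finset.mul_sum, M.p2_sum]
    · simp [h]
  have hPXZ : ∀ x z, M.P (fun u => M.X u = x ∧ M.Z u = z) = a x * b x z := by
    intro x z
    simp only [FrontdoorSCM.P, FrontdoorSCM.w, FrontdoorSCM.X, FrontdoorSCM.Z,
      Fintype.sum_prod_type, ha, hb, Finset.sum_mul]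
    refine Finset.sum_congr rfl fun u1 _ => ?_
    by_cases h : M.fX u1 = x
    · simp only [h, if_true, true_and, Finset.sum_mul]
      rw [Finset.mul_sum]
      refine Finset.sum_congr rfl fun u2 _ => ?_
      by_cases h2 : M.fZ x u2 = z <;> simp [h2]
    · simp [h]
  have hPYXZ : ∀ x z, M.P (fun u => M.Y u = false ∧ (M.X u = x ∧ M.Z u = z))
      = c x z * b x z := by
    intro x z
    simp only [FrontdoorSCM.P, FrontdoorSCM.w, FrontdoorSCM.X, FrontdoorSCM.Z,
      FrontdoorSCM.Y, Fintype.sum_prod_type, hc, hb, Finset.sum_mul]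
    refine Finset.sum_congr rfl fun u1 _ => ?_
    rw [Finset.mul_sum]
    refine Finset.sum_congr rfl fun u2 _ => ?_
    by_cases hx : M.fX u1 = x
    · by_cases h2 : M.fZ x u2 = z
      · by_cases hy : M.fY z u1 = false <;> simp [hx, h2, hy]
      · simp [hx, h2]
    · simp [hx]
  have hPdo : M.Pdo false false = ∑ u2, M.p2 u2 * d (M.fZ false u2) := by
    simp only [FrontdoorSCM.Pdo, FrontdoorSCM.w, Fintype.sum_prod_type_right, hd]
    refine Finset.sum_congr rfl fun u2 _ => ?_
    rw [Finset.mul_sum]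
    refine Finset.sum_congr rfl fun u1 _ => ?_
    by_cases h : M.fY (M.fZ false u2) u1 = false <;> simp [h, mul_comm]
  have hsum : ∑ z, b false z * d z = ∑ u2, M.p2 u2 * d (M.fZ false u2) := by
    simp only [hb, Finset.sum_mul]
    rw [Finset.sum_comm]
    refine Finset.sum_congr rfl fun u2 _ => ?_
    simp [ite_mul, Finset.sum_ite_eq]
  have hcd : ∀ z, ∑ x, c x z = d z := by
    intro z
    simp only [hc, hd]
    rw [Finset.sum_comm]
    refine Finset.sum_congr rfl fun u1 _ => ?_
    by_cases hy : M.fY z u1 = false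
    · simp [hy, Fintype.sum_ite_eq]
    · simp [hy]
  have hbne : ∀ x z, b x z ≠ 0 := by
    intro x z
    have := hpos x z
    rw [hPXZ] at this
    intro h0
    rw [h0, mul_zero] at this
    exact lt_irrefl _ this
  have hane : ∀ x, a x ≠ 0 := by
    intro x
    have := hpos x false
    rw [hPXZ] at this
    intro h0
    rw [h0, zero_mul] at this
    exact lt_irrefl _ this
  -- conditional probabilities
  have hcondZ : ∀ z, M.Pcond (fun u => M.Z u = z) (fun u => M.X u = false) = b false z := by
    intro z
    have hev : M.P (fun u => M.Z u = z ∧ M.X u = false)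
        = M.P (fun u => M.X u = false ∧ M.Z u = z) := by
      simp only [FrontdoorSCM.P]
      refine Finset.sum_congr rfl fun u _ => ?_
      by_cases h : M.Z u = z ∧ M.X u = false
      · rw [if_pos h, if_pos h.symm]
      · rw [if_neg h, if_neg (fun h2 => h h2.symm)]
    rw [FrontdoorSCM.Pcond, hev, hPXZ, hPX, mul_comm,
      mul_div_assoc, div_self (hane false), mul_one]
  have hcondY : ∀ x z, M.Pcond (fun u => M.Y u = false) (fun u => M.X u = x ∧ M.Z u = z)
      = c x z / a x := by
    intro x z
    rw [FrontdoorSCM.Pcond, hPYXZ, hPXZ]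
    rw [mul_comm (a x) (b x z), mul_comm (c x z) (b x z),
      mul_div_mul_left _ _ (hbne x z)]
  -- put everything together
  calc M.Pdo false false = ∑ z, b false z * d z := by rw [hPdo, hsum]
    _ = _ := by
        refine Finset.sum_congr rfl fun z _ => ?_
        rw [hcondZ]
        congr 1
        rw [← hcd z]
        refine Finset.sum_congr rfl fun x _ => ?_
        rw [hcondY, hPX, div_mul_cancel₀ _ (hane x)]
end
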